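/- Fix a ∈ ℝ and b ∈ ℂ with b ≠ 0, and set c = 0. Suppose E² = a² + |b|² (so E = ±√(a² + |b|²), and E ≠ 0 since b ≠ 0). Then Sol(a, b, 0, E) is one-dimensional, spanned by the sequence ((a + E)/b)·e₁⁰ + e₄⁰, where e₁⁰(1) = (1,0,0,0), e₄⁰(1) = (0,0,0,1) and e₁⁰(n) = e₄⁰(n) = 0 for n ≥ 2. Moreover, with E₊ = √(a² + |b|²) and E₋ = −E₊, the sum Sol(a, b, 0, E₊) + Sol(a, b, 0, E₋) is direct and equals the two-dimensional span of e₁⁰ and e₄⁰. -/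

import Mathlib

noncomputable section

open scoped ComplexConjugate

/-- The on-site matrix `V` of the local model. -/
def Vmat (a : ℝ) (b c : ℂ) : Matrix (Fin 4) (Fin 4) ℂ :=
  !![(a : ℂ), conj c, 0, conj b;
     c, -(a : ℂ), conj b, 0;
     0, b, (a : ℂ), -c;
     b, 0, -(conj c), -(a : ℂ)]

/-- The hopping matrix `A` of the local model. -/
def Amat : Matrix (Fin 4) (Fin 4) ℂ :=
  !![0, -1, 0, 0;
     0, 0, 0, 0;
     0, 0, 0, 0;
     0, 0, 1, 0]

/-- `ψ : ℕ → (Fin 4 → ℂ)` (with `ψ n` standing for the value at the site `n + 1` of the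
half-line `{1, 2, 3, …}`) solves the half-line eigenvalue equation `(H♯ − E)ψ = 0`:
`(V − E·I)ψ(1) + A*ψ(2) = 0` and `Aψ(n) + (V − E·I)ψ(n+1) + A*ψ(n+2) = 0` for all `n ≥ 1`. -/
def IsSolSeq (a : ℝ) (b c : ℂ) (E : ℝ) (ψ : ℕ → Fin 4 → ℂ) : Prop :=
  (Vmat a b c - (E : ℂ) • 1).mulVec (ψ 0) + (Amat.conjTranspose).mulVec (ψ 1) = 0 ∧
    ∀ n : ℕ,
      Amat.mulVec (ψ n) + (Vmat a b c - (E : ℂ) • 1).mulVec (ψ (n + 1)) +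
        (Amat.conjTranspose).mulVec (ψ (n + 2)) = 0

/-- The `ℓ²` condition: `∑_{n ≥ 1} ‖ψ(n)‖² < ∞`. -/
def IsL2Seq (ψ : ℕ → Fin 4 → ℂ) : Prop :=
  Summable fun n => ∑ i, ‖ψ n i‖ ^ 2

/-- The space `Sol(a, b, c, E)` of `ℓ²`-solutions of the half-line eigenvalue equation. -/
def Sol (a : ℝ) (b c : ℂ) (E : ℝ) : Set (ℕ → Fin 4 → ℂ) :=
  {ψ | IsSolSeq a b c E ψ ∧ IsL2Seq ψ}

/-- The sequence `e₁` with `e₁(n) = (c^{n−1}, 0, 0, 0)` (convention `0⁰ = 1`). -/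
def eSeq₁ (c : ℂ) : ℕ → Fin 4 → ℂ := fun n => ![c ^ n, 0, 0, 0]

/-- The sequence `e₄` with `e₄(n) = (0, 0, 0, c^{n−1})` (convention `0⁰ = 1`). -/
def eSeq₄ (c : ℂ) : ℕ → Fin 4 → ℂ := fun n => ![0, 0, 0, c ^ n]

/-- The sequence `e₁⁰` with `e₁⁰(1) = (1,0,0,0)` and `e₁⁰(n) = 0` for `n ≥ 2`. -/
def e₁₀ : ℕ → Fin 4 → ℂ := fun n => if n = 0 then ![1, 0, 0, 0] else 0

/-- The sequence `e₄⁰` with `e₄⁰(1) = (0,0,0,1)` and `e₄⁰(n) = 0` for `n ≥ 2`. -/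
def e₄₀ : ℕ → Fin 4 → ℂ := fun n => if n = 0 then ![0, 0, 0, 1] else 0

lemma mulVecM (a E : ℝ) (b : ℂ) (v : Fin 4 → ℂ) :
    (Vmat a b 0 - (E : ℂ) • 1).mulVec v =
      ![((a:ℂ)-E)*v 0 + conj b * v 3, (-(a:ℂ)-E)*v 1 + conj b * v 2,
        b*v 1 + ((a:ℂ)-E)*v 2, b*v 0 + (-(a:ℂ)-E)*v 3] := by
  funext i
  fin_cases i <;>
    simp [Vmat, Matrix.mulVec, dotProduct, Fin.sum_univ_four, Matrix.sub_apply,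
      Matrix.smul_apply, Matrix.one_apply]

lemma mulVecA (v : Fin 4 → ℂ) :
    Amat.mulVec v = ![-v 1, 0, 0, v 2] := by
  funext i
  fin_cases i <;>
    simp [Amat, Matrix.mulVec, dotProduct, Fin.sum_univ_four]

lemma mulVecAstar (v : Fin 4 → ℂ) :
    Amat.conjTranspose.mulVec v = ![0, -v 0, v 3, 0] := by
  funext i
  fin_cases i <;>
    simp [Amat, Matrix.mulVec, dotProduct, Fin.sum_univ_four,
      Matrix.conjTranspose_apply, Matrix.vecHead, Matrix.vecTail]

lemma keyC (a E : ℝ) (b : ℂ) (hE : E ^ 2 = a ^ 2 + ‖b‖ ^ 2) :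
    ((E : ℂ)) ^ 2 = (a : ℂ) ^ 2 + b * conj b := by
  rw [Complex.mul_conj]
  have : Complex.normSq b = ‖b‖ ^ 2 := by
    rw [Complex.normSq_eq_norm_sq]
  rw [this]
  exact_mod_cast congrArg (fun x : ℝ => (x : ℂ)) hE

lemma sol_structure (a : ℝ) (b : ℂ) (E : ℝ) (hE : E ^ 2 = a ^ 2 + ‖b‖ ^ 2)
    (ψ : ℕ → Fin 4 → ℂ) (h : IsSolSeq a b 0 E ψ) :
    (∀ n, n ≠ 0 → ψ n = 0) ∧ ψ 0 1 = 0 ∧ ψ 0 2 = 0 ∧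
      b * ψ 0 0 = ((a : ℂ) + E) * ψ 0 3 := by
  obtain ⟨hB, hR⟩ := h
  have key := keyC a E b hE
  rw [mulVecM, mulVecAstar] at hB
  have b0 : ((a:ℂ)-E)*ψ 0 0 + conj b * ψ 0 3 = 0 := by
    have h := congrFun hB 0; simpa using h
  have b1 : (-(a:ℂ)-E)*ψ 0 1 + conj b * ψ 0 2 - ψ 1 0 = 0 := by
    have h := congrFun hB 1; simp at h; linear_combination h
  have b2 : b*ψ 0 1 + ((a:ℂ)-E)*ψ 0 2 + ψ 1 3 = 0 := by
    have h := congrFun hB 2; simp at h; linear_combination h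
  have b3 : b*ψ 0 0 + (-(a:ℂ)-E)*ψ 0 3 = 0 := by
    have h := congrFun hB 3; simpa using h
  have hRv : ∀ n, (![-ψ n 1, 0, 0, ψ n 2] +
      ![((a:ℂ)-E)*ψ (n+1) 0 + conj b * ψ (n+1) 3,
        (-(a:ℂ)-E)*ψ (n+1) 1 + conj b * ψ (n+1) 2,
        b*ψ (n+1) 1 + ((a:ℂ)-E)*ψ (n+1) 2,
        b*ψ (n+1) 0 + (-(a:ℂ)-E)*ψ (n+1) 3] +
      ![0, -ψ (n+2) 0, ψ (n+2) 3, 0]) = 0 := by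
    intro n
    rw [← mulVecA, ← mulVecM (a := a) (E := E) (b := b), ← mulVecAstar]
    exact hR n
  have e0 : ∀ n, -ψ n 1 + (((a:ℂ)-E)*ψ (n+1) 0 + conj b * ψ (n+1) 3) = 0 := by
    intro n; have h := congrFun (hRv n) 0; simpa using h
  have e1 : ∀ n, (-(a:ℂ)-E)*ψ (n+1) 1 + conj b * ψ (n+1) 2 - ψ (n+2) 0 = 0 := by
    intro n; have h := congrFun (hRv n) 1; simp at h; linear_combination h
  have e2 : ∀ n, b*ψ (n+1) 1 + ((a:ℂ)-E)*ψ (n+1) 2 + ψ (n+2) 3 = 0 := by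
    intro n; have h := congrFun (hRv n) 2; simp at h; linear_combination h
  have e3 : ∀ n, ψ n 2 + (b*ψ (n+1) 0 + (-(a:ℂ)-E)*ψ (n+1) 3) = 0 := by
    intro n; have h := congrFun (hRv n) 3; simp at h; linear_combination h
  -- components 0 and 3 vanish from index 2 on
  have z0 : ∀ n, ψ (n+2) 0 = 0 := by
    intro n
    linear_combination (-1 : ℂ) * e1 n + ((a:ℂ)+E) * e0 (n+1) + conj b * e3 (n+1)
      + ψ (n+2) 0 * key
  have z3 : ∀ n, ψ (n+2) 3 = 0 := by
    intro n
    linear_combination e2 n + b * e0 (n+1) - ((a:ℂ)-E) * e3 (n+1) + ψ (n+2) 3 * key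
  -- components 1 and 2 vanish from index 1 on
  have z1 : ∀ n, ψ (n+1) 1 = 0 := by
    intro n
    linear_combination (-1 : ℂ) * e0 (n+1) + ((a:ℂ)-E) * z0 n + conj b * z3 n
  have z2 : ∀ n, ψ (n+1) 2 = 0 := by
    intro n
    linear_combination e3 (n+1) - b * z0 n - (-(a:ℂ)-E) * z3 n
  -- components 1, 2 at index 0
  have w1 : ψ 0 1 = 0 := by
    linear_combination (-1:ℂ) * e0 0 - ((a:ℂ)-E) * b1 + conj b * b2 + ψ 0 1 * key
  have w2 : ψ 0 2 = 0 := by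
    linear_combination e3 0 + b * b1 + ((a:ℂ)+E) * b2 + ψ 0 2 * key
  -- components 0, 3 at index 1
  have w0 : ψ 1 0 = 0 := by linear_combination (-1:ℂ) * b1 - ((a:ℂ)+E) * w1 + conj b * w2
  have w3 : ψ 1 3 = 0 := by linear_combination b2 - b * w1 - ((a:ℂ)-E) * w2
  refine ⟨?_, w1, w2, by linear_combination b3⟩
  intro n hn
  funext i
  obtain ⟨m, rfl⟩ := Nat.exists_eq_add_of_lt (Nat.pos_of_ne_zero hn)
  simp only [Pi.zero_apply]
  fin_cases i
  · rcases m with _ | m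
    · simpa using w0
    · simpa [show 1 + (m+1) = m + 2 from by omega] using z0 m
  · simpa [Nat.add_comm] using z1 m
  · simpa [Nat.add_comm] using z2 m
  · rcases m with _ | m
    · simpa using w3
    · simpa [show 1 + (m+1) = m + 2 from by omega] using z3 m

lemma mem_sol_iff (a : ℝ) (b : ℂ) (hb : b ≠ 0) (E : ℝ) (hE : E ^ 2 = a ^ 2 + ‖b‖ ^ 2)
    (ψ : ℕ → Fin 4 → ℂ) :
    ψ ∈ Sol a b 0 E ↔ ∃ z : ℂ, ψ = z • ((((a : ℂ) + (E : ℂ)) / b) • e₁₀ + e₄₀) := by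
  have key := keyC a E b hE
  constructor
  · rintro ⟨hsol, -⟩
    obtain ⟨hz, h1, h2, h3⟩ := sol_structure a b E hE ψ hsol
    refine ⟨ψ 0 3, ?_⟩
    funext n i
    rcases n with _ | n
    · fin_cases i
      · simp only [Pi.smul_apply, Pi.add_apply, e₁₀, e₄₀, if_pos rfl, smul_eq_mul,
          Fin.reduceFinMk, ↓reduceIte, Matrix.cons_val_zero, mul_one, mul_zero, add_zero, zero_add]
        field_simp
        linear_combination h3
      · simp only [Pi.smul_apply, Pi.add_apply, e₁₀, e₄₀, if_pos rfl, smul_eq_mul]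
        simpa using h1
      · simp only [Pi.smul_apply, Pi.add_apply, e₁₀, e₄₀, if_pos rfl, smul_eq_mul]
        simpa using h2
      · simp [e₁₀, e₄₀]
    · have := congrFun (hz (n+1) (Nat.succ_ne_zero n)) i
      simp only [Pi.zero_apply] at this
      simp [this, e₁₀, e₄₀]
  · rintro ⟨z, rfl⟩
    set α : ℂ := ((a : ℂ) + (E : ℂ)) / b with hα
    have hψ0 : (z • (α • e₁₀ + e₄₀)) 0 = ![z*α, 0, 0, z] := by
      funext i; fin_cases i <;> simp [e₁₀, e₄₀, mul_comm]
    have hψs : ∀ n, (z • (α • e₁₀ + e₄₀)) (n+1) = 0 := by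
      intro n; funext i; simp [e₁₀, e₄₀]
    refine ⟨⟨?_, ?_⟩, ?_⟩
    · rw [hψ0, hψs 0, mulVecM, mulVecAstar]
      funext i
      fin_cases i
      · simp only [Pi.add_apply, Fin.reduceFinMk, Matrix.cons_val_zero, Matrix.cons_val, Pi.zero_apply, hα]
        field_simp
        linear_combination (-z) * key
      · simp
      · simp
      · simp only [Pi.add_apply, Fin.reduceFinMk, Pi.zero_apply, hα]
        simp only [Matrix.cons_val_three, Matrix.vecHead, Matrix.vecTail, Function.comp_apply,
          Fin.succ_zero_eq_one, Fin.succ_one_eq_two, Matrix.cons_val]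
        field_simp
        ring
    · intro n
      rcases n with _ | n
      · rw [hψ0, hψs 0, hψs 1, mulVecA]
        simp only [Matrix.mulVec_zero, add_zero]
        funext i; fin_cases i <;> simp
      · rw [hψs n, hψs (n+1), hψs (n+2)]
        simp [Matrix.mulVec_zero]
    · apply summable_of_ne_finset_zero (s := ({0} : Finset ℕ))
      intro n hn
      rcases n with _ | n
      · simp at hn
      · simp [hψs n]


/-- Fix `a ∈ ℝ`, `b ∈ ℂ` with `b ≠ 0`, and set `c = 0`. If `E² = a² + |b|²`, then
`Sol(a,b,0,E)` is one-dimensional, spanned by `((a+E)/b)·e₁⁰ + e₄⁰`. Moreover with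
`E₊ = √(a² + |b|²)` and `E₋ = −E₊`, the sum `Sol(a,b,0,E₊) + Sol(a,b,0,E₋)` is direct and
equals the two-dimensional span of `e₁⁰` and `e₄⁰`. -/
theorem stmt7 (a : ℝ) (b : ℂ) (hb : b ≠ 0) :
    (∀ E : ℝ, E ^ 2 = a ^ 2 + ‖b‖ ^ 2 →
      Sol a b 0 E =
        {ψ | ∃ z : ℂ, ψ = z • ((((a : ℂ) + (E : ℂ)) / b) • e₁₀ + e₄₀)}) ∧
    Sol a b 0 (Real.sqrt (a ^ 2 + ‖b‖ ^ 2)) ∩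
        Sol a b 0 (-Real.sqrt (a ^ 2 + ‖b‖ ^ 2)) = {0} ∧
    {ψ | ∃ φ ∈ Sol a b 0 (Real.sqrt (a ^ 2 + ‖b‖ ^ 2)),
        ∃ χ ∈ Sol a b 0 (-Real.sqrt (a ^ 2 + ‖b‖ ^ 2)), ψ = φ + χ} =
      {ψ | ∃ z w : ℂ, ψ = z • e₁₀ + w • e₄₀} := by
  have hb' : (0:ℝ) < ‖b‖ := norm_pos_iff.mpr hb
  have hpos : 0 < a ^ 2 + ‖b‖ ^ 2 := by positivity
  set Ep := Real.sqrt (a ^ 2 + ‖b‖ ^ 2) with hEp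
  have hEp2 : Ep ^ 2 = a ^ 2 + ‖b‖ ^ 2 := Real.sq_sqrt hpos.le
  have hEpm2 : (-Ep) ^ 2 = a ^ 2 + ‖b‖ ^ 2 := by rw [neg_sq]; exact hEp2
  have hEppos : 0 < Ep := Real.sqrt_pos.mpr hpos
  have hEpC : ((Ep : ℝ) : ℂ) ≠ 0 := by exact_mod_cast hEppos.ne'
  have hpc : ((-Ep : ℝ) : ℂ) = -(Ep : ℂ) := by push_cast; ring
  have part1 : ∀ E : ℝ, E ^ 2 = a ^ 2 + ‖b‖ ^ 2 →
      Sol a b 0 E = {ψ | ∃ z : ℂ, ψ = z • ((((a : ℂ) + (E : ℂ)) / b) • e₁₀ + e₄₀)} := by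
    intro E hE
    ext ψ
    exact mem_sol_iff a b hb E hE ψ
  refine ⟨part1, ?_, ?_⟩
  · rw [part1 Ep hEp2, part1 (-Ep) hEpm2]
    ext ψ
    simp only [Set.mem_inter_iff, Set.mem_setOf_eq, Set.mem_singleton_iff]
    constructor
    · rintro ⟨⟨z, rfl⟩, ⟨w, hw⟩⟩
      have h3 := congrFun (congrFun hw 0) 3
      have h0 := congrFun (congrFun hw 0) 0
      simp only [Pi.smul_apply, Pi.add_apply, e₁₀, e₄₀, if_pos rfl, smul_eq_mul] at h3 h0
      simp at h3 h0
      -- h3 : z = w, h0 : z * α = w * β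
      have hz0 : z = 0 := by
        have h2 : z * (2 * (Ep : ℂ)) = 0 := by
          field_simp at h0
          linear_combination h0 - ((a:ℂ) - Ep) * h3
        rcases mul_eq_zero.mp h2 with h | h
        · exact h
        · exact absurd h (by simp [hEpC])
      rw [hz0, zero_smul]
    · rintro rfl
      exact ⟨⟨0, by simp⟩, ⟨0, by simp⟩⟩
  · ext ψ
    simp only [Set.mem_setOf_eq]
    constructor
    · rintro ⟨φ, hφ, χ, hχ, rfl⟩
      rw [part1 Ep hEp2] at hφ
      rw [part1 (-Ep) hEpm2] at hχ
      obtain ⟨z₁, rfl⟩ := hφ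
      obtain ⟨z₂, rfl⟩ := hχ
      refine ⟨z₁ * (((a : ℂ) + (Ep : ℂ)) / b) + z₂ * (((a : ℂ) - (Ep : ℂ)) / b), z₁ + z₂, ?_⟩
      simp only [hpc]
      module
    · rintro ⟨z, w, rfl⟩
      set A₁ : ℂ := ((a : ℂ) + (Ep : ℂ)) / b with hA₁
      set A₂ : ℂ := ((a : ℂ) + ((-Ep : ℝ) : ℂ)) / b with hA₂
      set z₁ : ℂ := (z - A₂ * w) * b / (2 * Ep) with hz₁
      set z₂ : ℂ := w - z₁ with hz₂
      refine ⟨z₁ • (A₁ • e₁₀ + e₄₀), ?_, z₂ • (A₂ • e₁₀ + e₄₀), ?_, ?_⟩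
      · rw [part1 Ep hEp2]; exact ⟨z₁, rfl⟩
      · rw [part1 (-Ep) hEpm2]; exact ⟨z₂, rfl⟩
      · have h1 : z₁ * A₁ + z₂ * A₂ = z := by
          rw [hz₂, hz₁, hA₁, hA₂, hpc]
          field_simp
          ring
        have h2 : z₁ + z₂ = w := by rw [hz₂]; ring
        rw [← h1, ← h2]
        module
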